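/- arXiv:2512.20269 — 2 statements merged into one kernel-verified Lean document; each statement's English description precedes it below -/
import Mathlib

section
/- Let Q₁ ∈ ℝ^{m₁×m₁}, Q₂ ∈ ℝ^{m₂×m₂} be invertible matrices, Λ₁ ∈ ℝ^{m₁×m₁}, Λ₂ ∈ ℝ^{m₂×m₂} diagonal, M₁ = Q₁^{-⊤}Q₁^{-1}, M₂ = Q₂^{-⊤}Q₂^{-1}, K₁ = Q₁^{-⊤}Λ₁Q₁^{-1}, K₂ = Q₂^{-⊤}Λ₂Q₂^{-1}. If Λ₂ ⊗ I + I ⊗ Λ₁ is invertible, then the matrix A := K₁ ⊗ M₂ + M₁ ⊗ K₂ is invertible with A^{-1} = (Q₂ ⊗ Q₁)(Λ₂ ⊗ I + I ⊗ Λ₁)^{-1}(Q₂^⊤ ⊗ Q₁^⊤). -/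
open Matrix
open scoped Kronecker

/-- Fast Diagonalization: if `M_k = Q_k^{-T} Q_k^{-1}`, `K_k = Q_k^{-T} Λ_k Q_k^{-1}` with
`Λ_k` diagonal and `Λ₂ ⊗ I + I ⊗ Λ₁` invertible, then
`A = K₁ ⊗ M₂ + M₁ ⊗ K₂` is invertible with
`A⁻¹ = (Q₂ ⊗ Q₁)(Λ₂ ⊗ I + I ⊗ Λ₁)⁻¹(Q₂ᵀ ⊗ Q₁ᵀ)`. -/
theorem stmt0 {m₁ m₂ : ℕ}
    (Q₁ Λ₁ : Matrix (Fin m₁) (Fin m₁) ℝ) (Q₂ Λ₂ : Matrix (Fin m₂) (Fin m₂) ℝ)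
    (hQ₁ : IsUnit Q₁.det) (hQ₂ : IsUnit Q₂.det)
    (hΛ₁ : Λ₁.IsDiag) (hΛ₂ : Λ₂.IsDiag)
    (M₁ : Matrix (Fin m₁) (Fin m₁) ℝ) (hM₁ : M₁ = Q₁⁻¹ᵀ * Q₁⁻¹)
    (M₂ : Matrix (Fin m₂) (Fin m₂) ℝ) (hM₂ : M₂ = Q₂⁻¹ᵀ * Q₂⁻¹)
    (K₁ : Matrix (Fin m₁) (Fin m₁) ℝ) (hK₁ : K₁ = Q₁⁻¹ᵀ * Λ₁ * Q₁⁻¹)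
    (K₂ : Matrix (Fin m₂) (Fin m₂) ℝ) (hK₂ : K₂ = Q₂⁻¹ᵀ * Λ₂ * Q₂⁻¹)
    (hD : IsUnit (Λ₂ ⊗ₖ (1 : Matrix (Fin m₁) (Fin m₁) ℝ)
        + (1 : Matrix (Fin m₂) (Fin m₂) ℝ) ⊗ₖ Λ₁).det)
    (A : Matrix (Fin m₂ × Fin m₁) (Fin m₂ × Fin m₁) ℝ)
    (hA : A = K₂ ⊗ₖ M₁ + M₂ ⊗ₖ K₁) :
    IsUnit A.det ∧
      A⁻¹ = (Q₂ ⊗ₖ Q₁) *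
        (Λ₂ ⊗ₖ (1 : Matrix (Fin m₁) (Fin m₁) ℝ)
          + (1 : Matrix (Fin m₂) (Fin m₂) ℝ) ⊗ₖ Λ₁)⁻¹ * (Q₂ᵀ ⊗ₖ Q₁ᵀ) := by
  set D := Λ₂ ⊗ₖ (1 : Matrix (Fin m₁) (Fin m₁) ℝ)
      + (1 : Matrix (Fin m₂) (Fin m₂) ℝ) ⊗ₖ Λ₁ with hDdef
  have hA' : A = (Q₂⁻¹ᵀ ⊗ₖ Q₁⁻¹ᵀ) * D * (Q₂⁻¹ ⊗ₖ Q₁⁻¹) := by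
    have h1 : K₂ ⊗ₖ M₁
        = (Q₂⁻¹ᵀ ⊗ₖ Q₁⁻¹ᵀ) * (Λ₂ ⊗ₖ (1 : Matrix (Fin m₁) (Fin m₁) ℝ))
          * (Q₂⁻¹ ⊗ₖ Q₁⁻¹) := by
      rw [hK₂, hM₁, ← Matrix.mul_kronecker_mul, ← Matrix.mul_kronecker_mul,
        Matrix.mul_one]
    have h2 : M₂ ⊗ₖ K₁
        = (Q₂⁻¹ᵀ ⊗ₖ Q₁⁻¹ᵀ) * ((1 : Matrix (Fin m₂) (Fin m₂) ℝ) ⊗ₖ Λ₁)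
          * (Q₂⁻¹ ⊗ₖ Q₁⁻¹) := by
      rw [hK₁, hM₂, ← Matrix.mul_kronecker_mul, ← Matrix.mul_kronecker_mul,
        Matrix.mul_one]
    rw [hA, h1, h2, hDdef, Matrix.mul_add, Matrix.add_mul]
  have hQ₁i : IsUnit (Q₁⁻¹).det := by
    rw [Matrix.det_nonsing_inv]; exact hQ₁.ringInverse
  have hQ₂i : IsUnit (Q₂⁻¹).det := by
    rw [Matrix.det_nonsing_inv]; exact hQ₂.ringInverse
  have hL : IsUnit (Q₂⁻¹ᵀ ⊗ₖ Q₁⁻¹ᵀ).det := by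
    rw [Matrix.det_kronecker, Matrix.det_transpose, Matrix.det_transpose]
    exact (hQ₂i.pow _).mul (hQ₁i.pow _)
  have hR : IsUnit (Q₂⁻¹ ⊗ₖ Q₁⁻¹).det := by
    rw [Matrix.det_kronecker]
    exact (hQ₂i.pow _).mul (hQ₁i.pow _)
  have hAu : IsUnit A.det := by
    rw [hA', Matrix.det_mul, Matrix.det_mul]
    exact (hL.mul hD).mul hR
  refine ⟨hAu, ?_⟩
  rw [hA', Matrix.mul_inv_rev, Matrix.mul_inv_rev, Matrix.inv_kronecker,
    Matrix.inv_kronecker, Matrix.nonsing_inv_nonsing_inv _ hQ₂,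
    Matrix.nonsing_inv_nonsing_inv _ hQ₁, Matrix.transpose_nonsing_inv,
    Matrix.transpose_nonsing_inv, Matrix.nonsing_inv_nonsing_inv,
    Matrix.nonsing_inv_nonsing_inv, Matrix.mul_assoc]
  · rwa [Matrix.det_transpose]
  · rwa [Matrix.det_transpose]
end

section
/- Let A, P, K₁, K̃₁, K₂, K̃₂, M₁, M₂ be symmetric positive semidefinite real matrices with A = K₁ ⊗ M₂ + M₁ ⊗ K₂ and P = K̃₁ ⊗ M₂ + M₁ ⊗ K̃₂, where M₁, M₂ are positive definite. Suppose for k = 1,2 there are constants 0 < c_k ≤ C_k with c_k v^⊤ K̃_k v ≤ v^⊤ K_k v ≤ C_k v^⊤ K̃_k v for all v. Then for all vectors w, min(c₁,c₂) · w^⊤ P w ≤ w^⊤ A w ≤ max(C₁,C₂) · w^⊤ P w. -/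
open Matrix
open scoped Kronecker

/-- Kronecker product of real PSD matrices is PSD. -/
lemma psd_kron {n m : ℕ} {X : Matrix (Fin n) (Fin n) ℝ} {Y : Matrix (Fin m) (Fin m) ℝ}
    (hX : X.PosSemidef) (hY : Y.PosSemidef) : (X ⊗ₖ Y).PosSemidef := by
  exact hX.kronecker hY

lemma loewner_kron_right {n m : ℕ} {X Y : Matrix (Fin n) (Fin n) ℝ}
    {M : Matrix (Fin m) (Fin m) ℝ} (hX : X.IsHermitian) (hY : Y.IsHermitian)
    (hM : M.PosSemidef) (h : ∀ v, v ⬝ᵥ (X *ᵥ v) ≤ v ⬝ᵥ (Y *ᵥ v)) :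
    ∀ w : Fin n × Fin m → ℝ, w ⬝ᵥ ((X ⊗ₖ M) *ᵥ w) ≤ w ⬝ᵥ ((Y ⊗ₖ M) *ᵥ w) := by
  intro w
  have hD : (Y - X).PosSemidef := by
    refine Matrix.PosSemidef.of_dotProduct_mulVec_nonneg (hY.sub hX) fun v => ?_
    have := h v
    simp only [star_trivial, Matrix.sub_mulVec, dotProduct_sub]
    linarith
  have hq := (psd_kron hD hM).dotProduct_mulVec_nonneg w
  have heq : (Y - X) ⊗ₖ M = Y ⊗ₖ M - X ⊗ₖ M := by
    ext ⟨i, j⟩ ⟨k, l⟩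
    simp [Matrix.sub_apply, sub_mul]
  rw [heq] at hq
  simp only [star_trivial, Matrix.sub_mulVec, dotProduct_sub] at hq
  linarith

lemma loewner_kron_left {n m : ℕ} {X Y : Matrix (Fin m) (Fin m) ℝ}
    {M : Matrix (Fin n) (Fin n) ℝ} (hX : X.IsHermitian) (hY : Y.IsHermitian)
    (hM : M.PosSemidef) (h : ∀ v, v ⬝ᵥ (X *ᵥ v) ≤ v ⬝ᵥ (Y *ᵥ v)) :
    ∀ w : Fin n × Fin m → ℝ, w ⬝ᵥ ((M ⊗ₖ X) *ᵥ w) ≤ w ⬝ᵥ ((M ⊗ₖ Y) *ᵥ w) := by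
  intro w
  have hD : (Y - X).PosSemidef := by
    refine Matrix.PosSemidef.of_dotProduct_mulVec_nonneg (hY.sub hX) fun v => ?_
    have := h v
    simp only [star_trivial, Matrix.sub_mulVec, dotProduct_sub]
    linarith
  have hq := (psd_kron hM hD).dotProduct_mulVec_nonneg w
  have heq : M ⊗ₖ (Y - X) = M ⊗ₖ Y - M ⊗ₖ X := by
    ext ⟨i, j⟩ ⟨k, l⟩
    simp [Matrix.sub_apply, mul_sub]
  rw [heq] at hq
  simp only [star_trivial, Matrix.sub_mulVec, dotProduct_sub] at hq
  linarith

lemma quad_smul {n : Type*} [Fintype n] (c : ℝ) (X : Matrix n n ℝ) (v : n → ℝ) :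
    v ⬝ᵥ ((c • X) *ᵥ v) = c * (v ⬝ᵥ (X *ᵥ v)) := by
  rw [Matrix.smul_mulVec, dotProduct_smul, smul_eq_mul]

/-- Spectral equivalence of `A = K₁ ⊗ M₂ + M₁ ⊗ K₂` and `P = K̃₁ ⊗ M₂ + M₁ ⊗ K̃₂` under
two-sided Loewner bounds relating `K_k` and `K̃_k`. -/
theorem stmt2 {m₁ m₂ : ℕ}
    (K₁ Kt₁ M₁ : Matrix (Fin m₁) (Fin m₁) ℝ) (K₂ Kt₂ M₂ : Matrix (Fin m₂) (Fin m₂) ℝ)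
    (hK₁ : K₁.PosSemidef) (hKt₁ : Kt₁.PosSemidef) (hK₂ : K₂.PosSemidef)
    (hKt₂ : Kt₂.PosSemidef) (hM₁ : M₁.PosDef) (hM₂ : M₂.PosDef)
    (A P : Matrix (Fin m₁ × Fin m₂) (Fin m₁ × Fin m₂) ℝ)
    (hA : A = K₁ ⊗ₖ M₂ + M₁ ⊗ₖ K₂) (hP : P = Kt₁ ⊗ₖ M₂ + M₁ ⊗ₖ Kt₂)
    (hAsym : A.IsSymm) (hPsym : P.IsSymm) (hApsd : A.PosSemidef) (hPpsd : P.PosSemidef)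
    (c₁ C₁ c₂ C₂ : ℝ) (hc₁ : 0 < c₁) (hc₂ : 0 < c₂) (hcC₁ : c₁ ≤ C₁) (hcC₂ : c₂ ≤ C₂)
    (h₁ : ∀ v : Fin m₁ → ℝ,
      c₁ * (v ⬝ᵥ (Kt₁ *ᵥ v)) ≤ v ⬝ᵥ (K₁ *ᵥ v) ∧ v ⬝ᵥ (K₁ *ᵥ v) ≤ C₁ * (v ⬝ᵥ (Kt₁ *ᵥ v)))
    (h₂ : ∀ v : Fin m₂ → ℝ,
      c₂ * (v ⬝ᵥ (Kt₂ *ᵥ v)) ≤ v ⬝ᵥ (K₂ *ᵥ v) ∧ v ⬝ᵥ (K₂ *ᵥ v) ≤ C₂ * (v ⬝ᵥ (Kt₂ *ᵥ v))) :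
    ∀ w : Fin m₁ × Fin m₂ → ℝ,
      min c₁ c₂ * (w ⬝ᵥ (P *ᵥ w)) ≤ w ⬝ᵥ (A *ᵥ w) ∧
        w ⬝ᵥ (A *ᵥ w) ≤ max C₁ C₂ * (w ⬝ᵥ (P *ᵥ w)) := by
  intro w
  have hM₁p := hM₁.posSemidef
  have hM₂p := hM₂.posSemidef
  have hsmul : ∀ {n : ℕ} (c : ℝ) (X : Matrix (Fin n) (Fin n) ℝ),
      X.IsHermitian → (c • X).IsHermitian := fun c X hX => by
    have h' : Xᵀ = X := by simpa using hX.eq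
    simp [Matrix.IsHermitian, Matrix.conjTranspose_smul, h']
  -- smul-kronecker identities
  have hsk₁ : ∀ c : ℝ, (c • Kt₁) ⊗ₖ M₂ = c • (Kt₁ ⊗ₖ M₂) := fun c => by
    ext ⟨i, j⟩ ⟨k, l⟩; simp [mul_assoc]
  have hsk₂ : ∀ c : ℝ, M₁ ⊗ₖ (c • Kt₂) = c • (M₁ ⊗ₖ Kt₂) := fun c => by
    ext ⟨i, j⟩ ⟨k, l⟩; simp; ring
  -- the four bounds
  have lo1 := loewner_kron_right (M := M₂) (hsmul c₁ Kt₁ hKt₁.1) hK₁.1 hM₂p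
    (fun v => by rw [quad_smul]; exact (h₁ v).1) w
  have hi1 := loewner_kron_right (M := M₂) hK₁.1 (hsmul C₁ Kt₁ hKt₁.1) hM₂p
    (fun v => by rw [quad_smul]; exact (h₁ v).2) w
  have lo2 := loewner_kron_left (M := M₁) (hsmul c₂ Kt₂ hKt₂.1) hK₂.1 hM₁p
    (fun v => by rw [quad_smul]; exact (h₂ v).1) w
  have hi2 := loewner_kron_left (M := M₁) hK₂.1 (hsmul C₂ Kt₂ hKt₂.1) hM₁p
    (fun v => by rw [quad_smul]; exact (h₂ v).2) w
  rw [hsk₁ c₁, quad_smul] at lo1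
  rw [hsk₁ C₁, quad_smul] at hi1
  rw [hsk₂ c₂, quad_smul] at lo2
  rw [hsk₂ C₂, quad_smul] at hi2
  -- nonnegativity of the P pieces
  have p1 : 0 ≤ w ⬝ᵥ ((Kt₁ ⊗ₖ M₂) *ᵥ w) := by simpa only [star_trivial] using (psd_kron hKt₁ hM₂p).dotProduct_mulVec_nonneg w
  have p2 : 0 ≤ w ⬝ᵥ ((M₁ ⊗ₖ Kt₂) *ᵥ w) := by simpa only [star_trivial] using (psd_kron hM₁p hKt₂).dotProduct_mulVec_nonneg w
  subst hA hP
  simp only [Matrix.add_mulVec, dotProduct_add]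
  constructor
  · have h1 : min c₁ c₂ * (w ⬝ᵥ ((Kt₁ ⊗ₖ M₂) *ᵥ w)) ≤ c₁ * (w ⬝ᵥ ((Kt₁ ⊗ₖ M₂) *ᵥ w)) :=
      mul_le_mul_of_nonneg_right (min_le_left _ _) p1
    have h2 : min c₁ c₂ * (w ⬝ᵥ ((M₁ ⊗ₖ Kt₂) *ᵥ w)) ≤ c₂ * (w ⬝ᵥ ((M₁ ⊗ₖ Kt₂) *ᵥ w)) :=
      mul_le_mul_of_nonneg_right (min_le_right _ _) p2
    rw [mul_add]
    linarith
  · have h1 : C₁ * (w ⬝ᵥ ((Kt₁ ⊗ₖ M₂) *ᵥ w)) ≤ max C₁ C₂ * (w ⬝ᵥ ((Kt₁ ⊗ₖ M₂) *ᵥ w)) :=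
      mul_le_mul_of_nonneg_right (le_max_left _ _) p1
    have h2 : C₂ * (w ⬝ᵥ ((M₁ ⊗ₖ Kt₂) *ᵥ w)) ≤ max C₁ C₂ * (w ⬝ᵥ ((M₁ ⊗ₖ Kt₂) *ᵥ w)) :=
      mul_le_mul_of_nonneg_right (le_max_right _ _) p2
    rw [mul_add]
    linarith
end
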